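/- Let p be an odd prime, u ∈ {1,…,p-1}, and σ the field automorphism of Q(ζ_{p²}) sending ζ_{p²} ↦ ζ_{p²}^m for m a primitive root mod p (acting on p-th roots by ζ_p ↦ ζ_p^m). Then applying σ to the values of the 3-cocycle κ^u (κ as defined via exp(2πi [l]([j]+[k]-[j+k])/p²)) yields the cocycle κ^{mu mod p} times a coboundary; in particular the Galois orbit of the cohomology classes {[κ^u] : u = 1,…,p-1} under σ is a single orbit of size p-1. -/

import Mathlib

/-- The explicit 3-cocycle `κ(j,k,l) = exp(2πi [l]([j]+[k]-[j+k]) / p²)` on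
`Z/pZ`, where `[m] ∈ {0,…,p-1}` is the canonical representative. -/
noncomputable def kappa (p : ℕ) (j k l : ZMod p) : ℂ :=
  Complex.exp (2 * Real.pi * Complex.I *
    ((l.val : ℂ) * ((j.val : ℂ) + (k.val : ℂ) - ((j + k).val : ℂ))) / (p ^ 2))

open Complex Finset Subgroup

lemma kappa_eq (p : ℕ) [NeZero p] (x y z : ZMod p) :
    kappa p x y z =
      Complex.exp (2 * Real.pi * Complex.I *
        ((z.val * ((x.val + y.val) / p) : ℕ) : ℂ) / p) := by
  have hp0 : (p : ℂ) ≠ 0 := Nat.cast_ne_zero.mpr (NeZero.ne p)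
  set q := (x.val + y.val) / p with hq
  have hmod : p * q + (x.val + y.val) % p = x.val + y.val := Nat.div_add_mod _ _
  have hval : (x + y).val = (x.val + y.val) % p := ZMod.val_add x y
  have h2 : (x.val : ℂ) + (y.val : ℂ) =
      (p : ℂ) * (q : ℂ) + (((x.val + y.val) % p : ℕ) : ℂ) := by
    exact_mod_cast congrArg (fun n : ℕ => (n : ℂ)) hmod.symm
  have he : (x.val : ℂ) + y.val - ((x + y).val : ℂ) = (p : ℂ) * (q : ℂ) := by
    rw [hval, h2]; ring
  unfold kappa
  rw [he]
  congr 1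
  rw [Nat.cast_mul]
  field_simp

lemma kappa_pow_p (p : ℕ) [NeZero p] (x y z : ZMod p) : kappa p x y z ^ p = 1 := by
  have hp0 : (p : ℂ) ≠ 0 := Nat.cast_ne_zero.mpr (NeZero.ne p)
  rw [kappa_eq, ← Complex.exp_nat_mul]
  set n : ℕ := z.val * ((x.val + y.val) / p)
  have : (p : ℂ) * (2 * Real.pi * Complex.I * (n : ℂ) / p) = (n : ℤ) * (2 * Real.pi * Complex.I) := by
    push_cast; field_simp
  rw [this, Complex.exp_int_mul_two_pi_mul_I]

lemma kappa_pow_mod (p : ℕ) [NeZero p] (x y z : ZMod p) (a : ℕ) :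
    kappa p x y z ^ a = kappa p x y z ^ (a % p) := by
  conv_lhs => rw [← Nat.div_add_mod a p, pow_add, pow_mul, kappa_pow_p, one_pow, one_mul]

lemma prod_kappa (p : ℕ) [NeZero p] (x z : ZMod p) :
    ∏ y : ZMod p, kappa p x y z =
      Complex.exp (2 * Real.pi * Complex.I * ((z.val : ℂ) * (x.val : ℂ)) / p) := by
  have hp0 : (p : ℂ) ≠ 0 := Nat.cast_ne_zero.mpr (NeZero.ne p)
  unfold kappa
  rw [← Complex.exp_sum]
  congr 1
  have hre : ∑ y : ZMod p, (((x + y).val : ℂ)) = ∑ y : ZMod p, ((y.val : ℂ)) :=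
    Equiv.sum_comp (Equiv.addLeft x) (fun y => ((y.val : ℂ)))
  have hsum : ∑ y : ZMod p, ((x.val : ℂ) + (y.val : ℂ) - ((x + y).val : ℂ)) =
      (p : ℂ) * (x.val : ℂ) := by
    rw [Finset.sum_sub_distrib, Finset.sum_add_distrib, hre, Finset.sum_const,
      Finset.card_univ, ZMod.card]
    push_cast; ring
  calc ∑ y : ZMod p, 2 * Real.pi * Complex.I *
        ((z.val : ℂ) * ((x.val : ℂ) + (y.val : ℂ) - ((x + y).val : ℂ))) / (p^2)
      = (2 * Real.pi * Complex.I * (z.val : ℂ) / (p^2)) *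
        ∑ y : ZMod p, ((x.val : ℂ) + (y.val : ℂ) - ((x + y).val : ℂ)) := by
        rw [Finset.mul_sum]; apply Finset.sum_congr rfl; intro y _; ring
    _ = 2 * Real.pi * Complex.I * ((z.val : ℂ) * (x.val : ℂ)) / p := by
        rw [hsum]; field_simp


/-- Applying the Galois automorphism `σ : ζ_{p²} ↦ ζ_{p²}^{m'}` (`m' ≡ m mod p`,
`m` a primitive root mod `p`) to the values of `κ^u` yields `κ^{mu mod p}`
times a coboundary; moreover the classes `[κ^u]`, `u = 1,…,p-1`, form a single
Galois orbit of size `p-1`: multiplication by `m` acts transitively on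
`{1,…,p-1}` mod `p`, and the `p-1` cohomology classes are pairwise distinct. -/
theorem stmt_19 (p u m m' : ℕ) (hp : p.Prime) (hodd : Odd p)
    (hu1 : 1 ≤ u) (hu2 : u ≤ p - 1) (hm : orderOf (m : ZMod p) = p - 1)
    (hm' : m' ≡ m [MOD p]) :
    (∃ μ : ZMod p → ZMod p → ℂ, (∀ x y, μ x y ≠ 0) ∧
      ∀ x y z : ZMod p,
        (kappa p x y z) ^ (m' * u) =
          (kappa p x y z) ^ ((m * u) % p) *
            (μ y z * μ x (y + z) * (μ (x + y) z)⁻¹ * (μ x y)⁻¹)) ∧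
    (∀ u₁ u₂ : ℕ, 1 ≤ u₁ → u₁ ≤ p - 1 → 1 ≤ u₂ → u₂ ≤ p - 1 →
      ∃ r : ℕ, (m ^ r * u₁) % p = u₂ % p) ∧
    (∀ u₁ u₂ : ℕ, 1 ≤ u₁ → u₁ ≤ p - 1 → 1 ≤ u₂ → u₂ ≤ p - 1 →
      (∃ μ : ZMod p → ZMod p → ℂ, (∀ x y, μ x y ≠ 0) ∧
        ∀ x y z : ZMod p,
          (kappa p x y z) ^ u₁ =
            (kappa p x y z) ^ u₂ *
              (μ y z * μ x (y + z) * (μ (x + y) z)⁻¹ * (μ x y)⁻¹)) → u₁ = u₂) := by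
  haveI : Fact p.Prime := ⟨hp⟩
  have hp1 : 1 < p := hp.one_lt
  have hp0 : (p : ℂ) ≠ 0 := Nat.cast_ne_zero.mpr hp.pos.ne'
  refine ⟨?_, ?_, ?_⟩
  · refine ⟨fun _ _ => 1, fun _ _ => one_ne_zero, fun x y z => ?_⟩
    have hmod : (m' * u) % p = ((m * u) % p) % p := by
      have h1 : m' * u ≡ (m * u) % p [MOD p] :=
        (Nat.ModEq.mul_right u hm').trans (Nat.mod_modEq _ _).symm
      exact h1
    rw [kappa_pow_mod p x y z (m' * u), kappa_pow_mod p x y z ((m * u) % p), hmod]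
    simp
  · intro u₁ u₂ hu₁1 hu₁2 hu₂1 hu₂2
    -- m is a unit of order p-1, hence generates the unit group
    have hpow : (m : ZMod p) ^ (p - 1) = 1 := hm ▸ pow_orderOf_eq_one _
    have hunit : IsUnit (m : ZMod p) := by
      apply IsUnit.of_mul_eq_one ((m : ZMod p) ^ (p - 2))
      rw [← pow_succ']
      have : p - 2 + 1 = p - 1 := by omega
      rw [this, hpow]
    obtain ⟨M, hM⟩ := hunit
    have hMo : orderOf M = p - 1 := by rw [← orderOf_units, hM, hm]
    have hcard : Nat.card (ZMod p)ˣ = p - 1 := by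
      rw [Nat.card_eq_fintype_card, ZMod.card_units p]
    have htop : zpowers M = ⊤ := by
      apply Subgroup.eq_top_of_card_eq
      rw [Nat.card_eq_fintype_card, Fintype.card_zpowers, hMo, ← hcard,
        Nat.card_eq_fintype_card]
    have hu₁0 : (u₁ : ZMod p) ≠ 0 := by
      rw [Ne, ZMod.natCast_eq_zero_iff]
      intro hdvd
      have := Nat.le_of_dvd (by omega) hdvd
      omega
    have hu₂0 : (u₂ : ZMod p) ≠ 0 := by
      rw [Ne, ZMod.natCast_eq_zero_iff]
      intro hdvd
      have := Nat.le_of_dvd (by omega) hdvd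
      omega
    set U : (ZMod p)ˣ := Units.mk0 ((u₂ : ZMod p) * (u₁ : ZMod p)⁻¹)
      (mul_ne_zero hu₂0 (inv_ne_zero hu₁0))
    have hUmem : U ∈ zpowers M := htop ▸ Subgroup.mem_top U
    obtain ⟨r, hr⟩ := (mem_powers_iff_mem_zpowers).mpr hUmem
    refine ⟨r, ?_⟩
    have hval : ((m : ZMod p)) ^ r * (u₁ : ZMod p) = (u₂ : ZMod p) := by
      have : ((M ^ r : (ZMod p)ˣ) : ZMod p) = (u₂ : ZMod p) * (u₁ : ZMod p)⁻¹ := by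
        rw [show M ^ r = U from hr]; rfl
      rw [Units.val_pow_eq_pow_val, hM] at this
      rw [this]
      field_simp
    have : ((m ^ r * u₁ : ℕ) : ZMod p) = ((u₂ : ℕ) : ZMod p) := by push_cast; exact hval
    exact (ZMod.natCast_eq_natCast_iff _ _ _).mp this
  · rintro u₁ u₂ hu₁1 hu₁2 hu₂1 hu₂2 ⟨μ, hμ0, hμ⟩
    -- take the product over y of the identity at x = z = 1
    have hprodcob : ∏ y : ZMod p,
        (μ y 1 * μ 1 (y + 1) * (μ (1 + y) 1)⁻¹ * (μ 1 y)⁻¹) = 1 := by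
      rw [Finset.prod_mul_distrib, Finset.prod_mul_distrib, Finset.prod_mul_distrib,
        Finset.prod_inv_distrib, Finset.prod_inv_distrib]
      have h1 : ∏ y : ZMod p, μ (1 + y) 1 = ∏ y : ZMod p, μ y 1 :=
        Equiv.prod_comp (Equiv.addLeft 1) (fun y => μ y 1)
      have h2 : ∏ y : ZMod p, μ 1 (y + 1) = ∏ y : ZMod p, μ 1 y :=
        Equiv.prod_comp (Equiv.addRight 1) (fun y => μ 1 y)
      rw [h1, h2]
      have hA : ∏ y : ZMod p, μ y 1 ≠ 0 := Finset.prod_ne_zero_iff.mpr (fun y _ => hμ0 y 1)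
      have hB : ∏ y : ZMod p, μ 1 y ≠ 0 := Finset.prod_ne_zero_iff.mpr (fun y _ => hμ0 1 y)
      field_simp
    have hkey : (∏ y : ZMod p, kappa p 1 y 1) ^ u₁ = (∏ y : ZMod p, kappa p 1 y 1) ^ u₂ := by
      have h := Finset.prod_congr rfl (fun y (_ : y ∈ (Finset.univ : Finset (ZMod p))) => hμ 1 y 1)
      rw [Finset.prod_pow] at h
      rw [h]
      rw [Finset.prod_mul_distrib, Finset.prod_pow, hprodcob, mul_one]
    rw [prod_kappa] at hkey
    have hval1 : (1 : ZMod p).val = 1 := ZMod.val_one p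
    rw [hval1] at hkey
    rw [← Complex.exp_nat_mul, ← Complex.exp_nat_mul] at hkey
    obtain ⟨n, hn⟩ := Complex.exp_eq_exp_iff_exists_int.mp hkey
    have hπ : (2 * Real.pi * Complex.I : ℂ) ≠ 0 := by
      simp [Real.pi_ne_zero, Complex.I_ne_zero]
    have hC : (u₁ : ℂ) = (u₂ : ℂ) + n * p := by
      field_simp at hn
      have h2 : (u₁ : ℂ) * (2 * Real.pi * Complex.I) =
          ((u₂ : ℂ) + n * p) * (2 * Real.pi * Complex.I) := by linear_combination (2 * Real.pi * Complex.I) * hn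
      exact mul_right_cancel₀ hπ h2
    have hZ : (u₁ : ℤ) = (u₂ : ℤ) + n * p := by exact_mod_cast hC
    have hdvd : (p : ℤ) ∣ ((u₁ : ℤ) - u₂) := ⟨n, by rw [hZ]; ring⟩
    have habs : |(u₁ : ℤ) - u₂| < p := by
      rw [abs_lt]; omega
    have := Int.eq_zero_of_abs_lt_dvd hdvd habs
    omega
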